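/- For every integer r ≥ 4, the determinant of the (r−3)×(r−3) integer matrix whose (i, j) entry, for 1 ≤ i, j ≤ r−3, is the binomial coefficient C(2r+1−2j, i−1), equals (−2)^{(r−3)(r−4)/2}. -/

import Mathlib

open Finset Polynomial

lemma det_binomial_aux (m : ℕ) (v : Fin (m + 1) → ℕ)
    (hv : ∀ i j : Fin (m + 1), (v j : ℤ) - (v i : ℤ) = (-2) * ((j : ℕ) - (i : ℕ) : ℤ)) :
    (Matrix.of fun i j : Fin (m + 1) => ((v j).choose (i : ℕ) : ℤ)).det
      = (-2) ^ ((m + 1) * m / 2) := by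
  -- the choose matrix is the transpose of the row-point matrix
  have htr : (Matrix.of fun i j : Fin (m + 1) => ((v j).choose (i : ℕ) : ℤ)).det
      = (Matrix.of fun i j : Fin (m + 1) => ((v i).choose (j : ℕ) : ℤ)).det := by
    rw [← Matrix.det_transpose]
    rfl
  -- descPochhammer matrix equals factorial-scaled choose matrix
  have h2 : (Matrix.of fun i j : Fin (m + 1) => ((descPochhammer ℤ (j : ℕ)).eval (v i : ℤ))).det
      = (∏ i : Fin (m + 1), (Nat.factorial (i : ℕ) : ℤ)) *
        (Matrix.of fun i j : Fin (m + 1) => ((v i).choose (j : ℕ) : ℤ)).det := by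
    rw [← Matrix.det_mul_row]
    congr 1
    ext i j
    simp only [Matrix.of_apply]
    rw [descPochhammer_eval_eq_descFactorial, Nat.descFactorial_eq_factorial_mul_choose]
    push_cast
    ring
  -- descPochhammer matrix det equals vandermonde det
  have h1 : (Matrix.vandermonde fun i : Fin (m + 1) => (v i : ℤ)).det
      = (Matrix.of fun i j : Fin (m + 1) => ((descPochhammer ℤ (j : ℕ)).eval (v i : ℤ))).det :=
    Matrix.det_eval_matrixOfPolynomials_eq_det_vandermonde _ _
      (fun i => descPochhammer_natDegree ℤ i) (fun i => monic_descPochhammer ℤ i)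
  -- count the inversions
  have e1 : ∑ i : Fin (m + 1), #(Ioi i) = (m + 1) * m / 2 := by
    have hc : ∀ i : Fin (m + 1), #(Ioi i) = m + 1 - 1 - (i : ℕ) := fun i => Fin.card_Ioi i
    simp only [hc]
    rw [Fin.sum_univ_eq_sum_range (fun k => m + 1 - 1 - k) (m + 1),
      Finset.sum_range_reflect (fun k => k) (m + 1), Finset.sum_range_id]
    simp
  -- compute the vandermonde determinant
  have hvand : (Matrix.vandermonde fun i : Fin (m + 1) => (v i : ℤ)).det
      = (-2) ^ ((m + 1) * m / 2) * (∏ i : Fin (m + 1), (Nat.factorial (i : ℕ) : ℤ)) := by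
    rw [Matrix.det_vandermonde]
    calc ∏ i : Fin (m + 1), ∏ j ∈ Ioi i, ((v j : ℤ) - (v i : ℤ))
        = ∏ i : Fin (m + 1), ∏ j ∈ Ioi i, ((-2) * (((j : ℕ) : ℤ) - ((i : ℕ) : ℤ))) :=
          Finset.prod_congr rfl fun i _ => Finset.prod_congr rfl fun j _ => hv i j
      _ = (∏ i : Fin (m + 1), ∏ _j ∈ Ioi i, (-2 : ℤ)) *
          ∏ i : Fin (m + 1), ∏ j ∈ Ioi i, (((j : ℕ) : ℤ) - ((i : ℕ) : ℤ)) := by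
          rw [← Finset.prod_mul_distrib]
          exact Finset.prod_congr rfl fun i _ => Finset.prod_mul_distrib
      _ = (-2) ^ ((m + 1) * m / 2) * (∏ i : Fin (m + 1), (Nat.factorial (i : ℕ) : ℤ)) := by
          congr 1
          · simp only [Finset.prod_const]
            rw [Finset.prod_pow_eq_pow_sum, e1]
          · have hsf := Matrix.det_vandermonde_id_eq_superFactorial (R := ℤ) m
            rw [Matrix.det_vandermonde] at hsf
            rw [hsf, ← Nat.prod_range_succ_factorial m, Nat.cast_prod,
              ← Fin.prod_univ_eq_prod_range (fun k => (Nat.factorial k : ℤ)) (m + 1)]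
  -- put it together and cancel the factorials
  have hne : (∏ i : Fin (m + 1), (Nat.factorial (i : ℕ) : ℤ)) ≠ 0 :=
    Finset.prod_ne_zero_iff.mpr fun i _ => by
      exact_mod_cast Nat.factorial_ne_zero _
  have hfin := (h1.trans h2).symm.trans hvand
  rw [htr]
  exact mul_left_cancel₀ hne (hfin.trans (mul_comm _ _))

/-- For `r ≥ 4`, the determinant of the `(r-3) × (r-3)` matrix with `(i, j)` entry the
binomial coefficient `C(2r + 1 - 2j, i - 1)` (for `1 ≤ i, j ≤ r - 3`) equals
`(-2)^{(r-3)(r-4)/2}`. -/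
theorem det_binomial_matrix (r : ℕ) (hr : 4 ≤ r) :
    (Matrix.of fun i j : Fin (r - 3) =>
        ((2 * r + 1 - 2 * ((j : ℕ) + 1)).choose (i : ℕ) : ℤ)).det
      = (-2) ^ ((r - 3) * (r - 4) / 2) := by
  obtain ⟨m, hm⟩ : ∃ m, r - 3 = m + 1 := ⟨r - 4, by omega⟩
  have hm4 : r - 4 = m := by omega
  rw [hm, hm4]
  refine det_binomial_aux m (fun j => 2 * r + 1 - 2 * ((j : ℕ) + 1)) ?_
  intro i j
  have hi := i.2
  have hj := j.2
  have h1 : 2 * ((i : ℕ) + 1) ≤ 2 * r + 1 := by omega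
  have h2 : 2 * ((j : ℕ) + 1) ≤ 2 * r + 1 := by omega
  push_cast [Nat.cast_sub h1, Nat.cast_sub h2]
  ring
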